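/- The first homology of a box product of permutographs is generated by length 4 and length 6 cycles: let G = G_1 □ ⋯ □ G_m be the box product of permutographs G_j on words Fin N_j → Fin s_j (j = 1, …, m). Then every element of ker ∂ that lies in the ℤ-span of the ordered pairs of adjacent vertices of G is a ℤ-linear combination of edge chains of closed walks in G of length 2, length 4, and length 6. -/

import Mathlib

/-- The permutograph on words `Fin N → Fin s`: two words are adjacent iff one is obtained
from the other by exchanging two distinct letters sitting in adjacent positions `i, i+1`. -/
def permutograph (N s : ℕ) : SimpleGraph (Fin N → Fin s) where
  Adj v w := ∃ (i : ℕ) (h : i + 1 < N),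
      v ⟨i, Nat.lt_of_succ_lt h⟩ ≠ v ⟨i + 1, h⟩ ∧
      w = v ∘ Equiv.swap ⟨i, Nat.lt_of_succ_lt h⟩ ⟨i + 1, h⟩
  symm := by
    constructor
    rintro v w ⟨i, h, hne, rfl⟩
    refine ⟨i, h, ?_, ?_⟩
    · simpa using hne.symm
    · funext k
      simp
  loopless := by
    constructor
    rintro v ⟨i, h, hne, hv⟩
    apply hne
    conv_lhs => rw [hv]
    simp

/-- The box product of a family of simple graphs: two tuples are adjacent iff they agree in
all coordinates except exactly one, in which they are adjacent. -/
def boxProdFamily {ι : Type*} {V : ι → Type*} (G : ∀ i, SimpleGraph (V i)) :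
    SimpleGraph (∀ i, V i) where
  Adj a b := ∃ i, (G i).Adj (a i) (b i) ∧ ∀ j, j ≠ i → a j = b j
  symm := by
    constructor
    rintro a b ⟨i, hadj, hj⟩
    exact ⟨i, hadj.symm, fun j hne => (hj j hne).symm⟩
  loopless := by
    constructor
    rintro a ⟨i, hadj, -⟩
    exact hadj.ne rfl

/-- The boundary map from the free `ℤ`-module on the ordered pairs of adjacent vertices
(darts) of a simple graph to the free `ℤ`-module on its vertices, `(v,w) ↦ w - v`. -/
noncomputable def graphBoundary {V : Type*} (G : SimpleGraph V) :
    (G.Dart →₀ ℤ) →ₗ[ℤ] (V →₀ ℤ) :=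
  Finsupp.lift (V →₀ ℤ) ℤ G.Dart fun d =>
    Finsupp.single d.toProd.2 1 - Finsupp.single d.toProd.1 1

/-- The edge chain of a walk: the formal sum of its consecutive directed edges. -/
noncomputable def edgeChain {V : Type*} {G : SimpleGraph V} {u v : V} (w : G.Walk u v) :
    G.Dart →₀ ℤ :=
  (w.darts.map fun d => Finsupp.single d (1 : ℤ)).sum
namespace Stmt8

variable {m : ℕ} {N s : Fin m → ℕ}

abbrev V (N s : Fin m → ℕ) := ∀ j : Fin m, Fin (N j) → Fin (s j)

abbrev G (N s : Fin m → ℕ) : SimpleGraph (V N s) :=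
  boxProdFamily fun j => permutograph (N j) (s j)

/-- Swap the letters at positions `i` and `i+1` in coordinate `j`. -/
def swapV (v : V N s) (j : Fin m) (i : ℕ) (h : i + 1 < N j) : V N s :=
  Function.update v j (v j ∘ Equiv.swap ⟨i, Nat.lt_of_succ_lt h⟩ ⟨i + 1, h⟩)

lemma swapV_apply_ne (v : V N s) (j : Fin m) (i : ℕ) (h : i + 1 < N j) {j' : Fin m}
    (hj : j' ≠ j) : swapV v j i h j' = v j' := Function.update_of_ne hj _ _

lemma swapV_apply_self (v : V N s) (j : Fin m) (i : ℕ) (h : i + 1 < N j) :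
    swapV v j i h j = v j ∘ Equiv.swap ⟨i, Nat.lt_of_succ_lt h⟩ ⟨i + 1, h⟩ :=
  Function.update_self _ _ _

lemma swapV_fst (v : V N s) (j : Fin m) (i : ℕ) (h : i + 1 < N j) :
    swapV v j i h j ⟨i, Nat.lt_of_succ_lt h⟩ = v j ⟨i + 1, h⟩ := by
  rw [swapV_apply_self]; simp

lemma swapV_snd (v : V N s) (j : Fin m) (i : ℕ) (h : i + 1 < N j) :
    swapV v j i h j ⟨i + 1, h⟩ = v j ⟨i, Nat.lt_of_succ_lt h⟩ := by
  rw [swapV_apply_self]; simp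

lemma swapV_other (v : V N s) (j : Fin m) (i : ℕ) (h : i + 1 < N j) {k : Fin (N j)}
    (h1 : (k : ℕ) ≠ i) (h2 : (k : ℕ) ≠ i + 1) : swapV v j i h j k = v j k := by
  rw [swapV_apply_self]
  have : Equiv.swap (⟨i, Nat.lt_of_succ_lt h⟩ : Fin (N j)) ⟨i + 1, h⟩ k = k :=
    Equiv.swap_apply_of_ne_of_ne (by simp [Fin.ext_iff, h1]) (by simp [Fin.ext_iff, h2])
  simp only [Function.comp_apply, this]

lemma swapV_swapV (v : V N s) (j : Fin m) (i : ℕ) (h : i + 1 < N j) :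
    swapV (swapV v j i h) j i h = v := by
  funext j' k
  by_cases hj : j' = j
  · subst hj
    rw [swapV_apply_self, swapV_apply_self]
    simp
  · rw [swapV_apply_ne _ _ _ _ hj, swapV_apply_ne _ _ _ _ hj]

lemma adj_swapV (v : V N s) (j : Fin m) (i : ℕ) (h : i + 1 < N j)
    (hne : v j ⟨i, Nat.lt_of_succ_lt h⟩ ≠ v j ⟨i + 1, h⟩) :
    (G N s).Adj v (swapV v j i h) := by
  refine ⟨j, ⟨i, h, hne, ?_⟩, fun j' hj' => (swapV_apply_ne v j i h hj').symm⟩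
  rw [swapV_apply_self]

end Stmt8
namespace Stmt8

variable {m : ℕ} {N s : Fin m → ℕ}

/-- Descent at position `i` of coordinate `j`. -/
def descAt (v : V N s) (j : Fin m) (i : ℕ) : Prop :=
  ∃ h : i + 1 < N j, v j ⟨i + 1, h⟩ < v j ⟨i, Nat.lt_of_succ_lt h⟩

instance (v : V N s) (j : Fin m) (i : ℕ) : Decidable (descAt v j i) :=
  exists_prop_decidable _

/-- A common bound for all the `N j`. -/
def K (N : Fin m → ℕ) : ℕ := Finset.univ.sup N

lemma lt_K {v : V N s} {j : Fin m} {i : ℕ} (h : descAt v j i) : i < K N := by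
  obtain ⟨h, -⟩ := h
  have : N j ≤ K N := Finset.le_sup (Finset.mem_univ j)
  omega

/-- The finite set of descents of `v`, as a set of lexicographic pairs. -/
def Dset (v : V N s) : Finset (Fin m ×ₗ ℕ) :=
  ((Finset.univ ×ˢ Finset.range (K N)).filter fun p => descAt v p.1 p.2).map
    toLex.toEmbedding

lemma mem_Dset {v : V N s} {j : Fin m} {i : ℕ} :
    toLex (j, i) ∈ Dset v ↔ descAt v j i := by
  constructor
  · rintro h
    rw [Dset, Finset.mem_map_equiv] at h
    simpa using (Finset.mem_filter.mp h).2
  · intro h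
    rw [Dset, Finset.mem_map_equiv]
    refine Finset.mem_filter.mpr ⟨?_, by simpa using h⟩
    simp [Finset.mem_product, lt_K h]

lemma mem_Dset' {v : V N s} {x : Fin m ×ₗ ℕ} :
    x ∈ Dset v ↔ descAt v (ofLex x).1 (ofLex x).2 := mem_Dset

/-- The lexicographically first descent position. -/
def fpos (v : V N s) (h : (Dset v).Nonempty) : Fin m × ℕ := ofLex ((Dset v).min' h)

lemma descAt_fpos (v : V N s) (h : (Dset v).Nonempty) :
    descAt v (fpos v h).1 (fpos v h).2 := by
  have := (Dset v).min'_mem h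
  rwa [mem_Dset'] at this

/-- One bubble-sort step: swap the first descent (or do nothing if sorted). -/
def fsort (v : V N s) : V N s :=
  if h : (Dset v).Nonempty then
    swapV v (fpos v h).1 (fpos v h).2 (descAt_fpos v h).choose
  else v

lemma fsort_eq (v : V N s) (h : (Dset v).Nonempty) {j : Fin m} {i : ℕ} (hb : i + 1 < N j)
    (hmin : (Dset v).min' h = toLex (j, i)) : fsort v = swapV v j i hb := by
  rw [fsort, dif_pos h]
  have key : ∀ (p : Fin m × ℕ) (hp : p.2 + 1 < N p.1), p = (j, i) →
      swapV v p.1 p.2 hp = swapV v j i hb := by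
    rintro p hp rfl; rfl
  exact key _ _ (by rw [fpos, hmin]; rfl)

lemma adj_fsort (v : V N s) (h : (Dset v).Nonempty) : (G N s).Adj v (fsort v) := by
  rw [fsort, dif_pos h]
  obtain ⟨hb, hlt⟩ := descAt_fpos v h
  exact adj_swapV v _ _ _ (ne_of_gt hlt)

lemma fsort_eq_self (v : V N s) (h : ¬ (Dset v).Nonempty) : fsort v = v := dif_neg h

/-- descents are unchanged away from the swapped window. -/
lemma descAt_swapV_iff (v : V N s) (j0 : Fin m) (i0 : ℕ) (h0 : i0 + 1 < N j0) {j : Fin m}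
    {i : ℕ} (hside : j ≠ j0 ∨ i + 1 < i0 ∨ i0 + 1 < i) :
    descAt (swapV v j0 i0 h0) j i ↔ descAt v j i := by
  rcases hside with hj | hi
  · unfold descAt
    rw [swapV_apply_ne v j0 i0 h0 hj]
  · by_cases hj : j = j0
    · subst hj
      constructor <;> rintro ⟨h, hlt⟩ <;> refine ⟨h, ?_⟩
      · rwa [swapV_other v j i0 h0 (by simp only [Fin.val_mk]; omega) (by simp only [Fin.val_mk]; omega),
          swapV_other v j i0 h0 (by simp only [Fin.val_mk]; omega) (by simp only [Fin.val_mk]; omega)] at hlt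
      · rwa [swapV_other v j i0 h0 (by simp only [Fin.val_mk]; omega) (by simp only [Fin.val_mk]; omega),
          swapV_other v j i0 h0 (by simp only [Fin.val_mk]; omega) (by simp only [Fin.val_mk]; omega)]
    · unfold descAt
      rw [swapV_apply_ne v j0 i0 h0 hj]

lemma Dset_swapV_cases {v : V N s} {j0 : Fin m} {i0 : ℕ} {h0 : i0 + 1 < N j0}
    {x : Fin m ×ₗ ℕ} (hx : x ∈ Dset (swapV v j0 i0 h0)) :
    x ∈ Dset v ∨ ((ofLex x).1 = j0 ∧ i0 ≤ (ofLex x).2 + 1 ∧ (ofLex x).2 ≤ i0 + 1) := by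
  by_cases hside : (ofLex x).1 ≠ j0 ∨ (ofLex x).2 + 1 < i0 ∨ i0 + 1 < (ofLex x).2
  · left
    rw [mem_Dset'] at hx ⊢
    rwa [descAt_swapV_iff v j0 i0 h0 hside] at hx
  · right
    push_neg at hside
    exact ⟨hside.1, hside.2.1, hside.2.2⟩

end Stmt8
namespace Stmt8

variable {m : ℕ} {N s : Fin m → ℕ}

/-- Number of inversions of a word. -/
def invj {n t : ℕ} (u : Fin n → Fin t) : ℕ :=
  ((Finset.univ ×ˢ Finset.univ).filter fun pq : Fin n × Fin n =>
    pq.1 < pq.2 ∧ u pq.2 < u pq.1).card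

lemma swap_lt_swap {n : ℕ} {a b : Fin n} (hab : (a : ℕ) + 1 = (b : ℕ)) {p q : Fin n}
    (hpq : p < q) (hne : ¬(p = a ∧ q = b)) : Equiv.swap a b p < Equiv.swap a b q := by
  rw [Fin.lt_def] at hpq ⊢
  by_cases hpa : p = a
  · have hqb : q ≠ b := fun h => hne ⟨hpa, h⟩
    have hqb' : (q : ℕ) ≠ (b : ℕ) := by simpa [Fin.ext_iff] using hqb
    have hpa' : (p : ℕ) = (a : ℕ) := by simpa [Fin.ext_iff] using hpa
    have hqa : q ≠ a := by intro h; rw [Fin.ext_iff] at h; omega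
    rw [hpa, Equiv.swap_apply_left, Equiv.swap_apply_of_ne_of_ne hqa hqb]
    omega
  · by_cases hpb : p = b
    · have hpb' : (p : ℕ) = (b : ℕ) := by simpa [Fin.ext_iff] using hpb
      have hqa : q ≠ a := by intro h; rw [Fin.ext_iff] at h; omega
      have hqb : q ≠ b := by intro h; rw [Fin.ext_iff] at h; omega
      rw [hpb, Equiv.swap_apply_right, Equiv.swap_apply_of_ne_of_ne hqa hqb]
      omega
    · have hpa' : (p : ℕ) ≠ (a : ℕ) := by simpa [Fin.ext_iff] using hpa
      have hpb' : (p : ℕ) ≠ (b : ℕ) := by simpa [Fin.ext_iff] using hpb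
      rw [Equiv.swap_apply_of_ne_of_ne hpa hpb]
      by_cases hqa : q = a
      · have hqa' : (q : ℕ) = (a : ℕ) := by simpa [Fin.ext_iff] using hqa
        rw [hqa, Equiv.swap_apply_left]
        omega
      · by_cases hqb : q = b
        · have hqb' : (q : ℕ) = (b : ℕ) := by simpa [Fin.ext_iff] using hqb
          rw [hqb, Equiv.swap_apply_right]
          omega
        · rw [Equiv.swap_apply_of_ne_of_ne hqa hqb]
          omega

lemma invj_swap {n t : ℕ} (u : Fin n → Fin t) (a b : Fin n) (hab : (a : ℕ) + 1 = (b : ℕ))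
    (hu : u a < u b) : invj (u ∘ Equiv.swap a b) = invj u + 1 := by
  classical
  have hablt : a < b := by rw [Fin.lt_def]; omega
  set Sw := ((Finset.univ ×ˢ Finset.univ).filter fun pq : Fin n × Fin n =>
    pq.1 < pq.2 ∧ (u ∘ Equiv.swap a b) pq.2 < (u ∘ Equiv.swap a b) pq.1) with hSw
  set Sv := ((Finset.univ ×ˢ Finset.univ).filter fun pq : Fin n × Fin n =>
    pq.1 < pq.2 ∧ u pq.2 < u pq.1) with hSv
  have habSw : (a, b) ∈ Sw := by
    simp only [hSw, Finset.mem_filter, Finset.mem_product, Finset.mem_univ, true_and,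
      Function.comp_apply, Equiv.swap_apply_left, Equiv.swap_apply_right]
    exact ⟨hablt, hu⟩
  have habSv : (a, b) ∉ Sv := by
    simp only [hSv, Finset.mem_filter, Finset.mem_product, Finset.mem_univ, true_and]
    rintro ⟨-, h⟩
    exact absurd hu (not_lt_of_gt h)
  have hne_ab : ∀ p q : Fin n, p < q →
      ¬((Equiv.swap a b p, Equiv.swap a b q) = (a, b)) := by
    intro p q hlt h
    have h1 : Equiv.swap a b p = a := congrArg Prod.fst h
    have h2 : Equiv.swap a b q = b := congrArg Prod.snd h
    have hp : p = b := by
      have := congrArg (Equiv.swap a b) h1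
      rwa [Equiv.swap_apply_self, Equiv.swap_apply_left] at this
    have hq : q = a := by
      have := congrArg (Equiv.swap a b) h2
      rwa [Equiv.swap_apply_self, Equiv.swap_apply_right] at this
    subst hp; subst hq
    rw [Fin.lt_def] at hlt
    omega
  have hcard : (Sw.erase (a, b)).card = (Sv.erase (a, b)).card := by
    apply Finset.card_bij' (fun pq _ => (Equiv.swap a b pq.1, Equiv.swap a b pq.2))
      (fun pq _ => (Equiv.swap a b pq.1, Equiv.swap a b pq.2))
    · rintro ⟨p, q⟩ hpq
      rw [Finset.mem_erase] at hpq
      obtain ⟨hne, hmem⟩ := hpq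
      simp only [hSw, Finset.mem_filter, Finset.mem_product, Finset.mem_univ, true_and,
        Function.comp_apply] at hmem
      obtain ⟨hlt, hltu⟩ := hmem
      rw [Finset.mem_erase]
      refine ⟨hne_ab p q hlt, ?_⟩
      simp only [hSv, Finset.mem_filter, Finset.mem_product, Finset.mem_univ, true_and]
      refine ⟨swap_lt_swap hab hlt ?_, hltu⟩
      rintro ⟨rfl, rfl⟩
      exact hne rfl
    · rintro ⟨p, q⟩ hpq
      rw [Finset.mem_erase] at hpq
      obtain ⟨hne, hmem⟩ := hpq
      simp only [hSv, Finset.mem_filter, Finset.mem_product, Finset.mem_univ, true_and] at hmem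
      obtain ⟨hlt, hltu⟩ := hmem
      rw [Finset.mem_erase]
      refine ⟨hne_ab p q hlt, ?_⟩
      simp only [hSw, Finset.mem_filter, Finset.mem_product, Finset.mem_univ, true_and,
        Function.comp_apply, Equiv.swap_apply_self]
      refine ⟨swap_lt_swap hab hlt ?_, hltu⟩
      rintro ⟨rfl, rfl⟩
      exact hne rfl
    · rintro ⟨p, q⟩ _; simp
    · rintro ⟨p, q⟩ _; simp
  have h1 : invj (u ∘ Equiv.swap a b) = Sw.card := rfl
  have h2 : invj u = Sv.card := rfl
  have h3 : Sw.card = (Sw.erase (a, b)).card + 1 := by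
    rw [Finset.card_erase_of_mem habSw]
    have : 1 ≤ Sw.card := Finset.card_pos.mpr ⟨_, habSw⟩
    omega
  have h4 : Sv.card = (Sv.erase (a, b)).card := by
    rw [Finset.erase_eq_of_notMem habSv]
  rw [h1, h2, h3, h4, hcard]

/-- Total number of inversions. -/
def inv (v : V N s) : ℕ := ∑ j, invj (v j)

lemma inv_swapV_asc (v : V N s) (j : Fin m) (i : ℕ) (h : i + 1 < N j)
    (hasc : v j ⟨i, Nat.lt_of_succ_lt h⟩ < v j ⟨i + 1, h⟩) :
    inv (swapV v j i h) = inv v + 1 := by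
  have hup : ∀ j', j' ≠ j → invj (swapV v j i h j') = invj (v j') := fun j' hj' => by
    rw [swapV_apply_ne v j i h hj']
  have hj : invj (swapV v j i h j) = invj (v j) + 1 := by
    rw [swapV_apply_self]
    exact invj_swap (v j) _ _ (by simp) hasc
  rw [inv, inv, ← Finset.sum_erase_add _ _ (Finset.mem_univ j),
    ← Finset.sum_erase_add _ _ (Finset.mem_univ j), hj,
    Finset.sum_congr rfl fun j' hj' => hup j' (Finset.ne_of_mem_erase hj')]
  omega

lemma inv_swapV_desc (v : V N s) (j : Fin m) (i : ℕ) (h : i + 1 < N j)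
    (hdesc : v j ⟨i + 1, h⟩ < v j ⟨i, Nat.lt_of_succ_lt h⟩) :
    inv v = inv (swapV v j i h) + 1 := by
  have : inv (swapV (swapV v j i h) j i h) = inv (swapV v j i h) + 1 := by
    apply inv_swapV_asc
    rwa [swapV_fst, swapV_snd]
  rwa [swapV_swapV] at this

lemma inv_fsort (v : V N s) (h : (Dset v).Nonempty) : inv v = inv (fsort v) + 1 := by
  rw [fsort, dif_pos h]
  obtain ⟨hb, hlt⟩ := descAt_fpos v h
  exact inv_swapV_desc v _ _ _ hlt

end Stmt8
namespace Stmt8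

variable {m : ℕ} {N s : Fin m → ℕ}

/-- The generating set: edge chains of closed walks of length 2, 4 or 6. -/
def Sgen (N s : Fin m → ℕ) : Set ((G N s).Dart →₀ ℤ) :=
  {x | ∃ (u : V N s) (w : (G N s).Walk u u),
    (w.length = 2 ∨ w.length = 4 ∨ w.length = 6) ∧ x = edgeChain w}

/-- The span of the generating set. -/
noncomputable def M (N s : Fin m → ℕ) : Submodule ℤ ((G N s).Dart →₀ ℤ) :=
  Submodule.span ℤ (Sgen N s)

/-- The combing chain: the edge chain of the bubble-sort path from `v` to the sorted word. -/
noncomputable def P (v : V N s) : (G N s).Dart →₀ ℤ :=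
  if h : (Dset v).Nonempty then
    Finsupp.single (⟨(v, fsort v), adj_fsort v h⟩ : (G N s).Dart) 1 + P (fsort v)
  else 0
termination_by inv v
decreasing_by
  have := inv_fsort v h
  omega

lemma P_eq_of (v : V N s) (h : (Dset v).Nonempty) {x : V N s} (hx : fsort v = x)
    (hadj : (G N s).Adj v x) :
    P v = Finsupp.single (⟨(v, x), hadj⟩ : (G N s).Dart) 1 + P x := by
  subst hx
  rw [P, dif_pos h]

lemma P_eq_zero (v : V N s) (h : ¬(Dset v).Nonempty) : P v = 0 := by rw [P, dif_neg h]

lemma edgeChain_cons {V' : Type*} {G' : SimpleGraph V'} {u v w : V'} (h : G'.Adj u v)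
    (p : G'.Walk v w) :
    edgeChain (SimpleGraph.Walk.cons h p) =
      Finsupp.single (⟨(u, v), h⟩ : G'.Dart) 1 + edgeChain p := by
  simp [edgeChain]

@[simp] lemma edgeChain_nil {V' : Type*} {G' : SimpleGraph V'} {u : V'} :
    edgeChain (SimpleGraph.Walk.nil : G'.Walk u u) = 0 := by
  simp [edgeChain]

lemma loop2_mem (d : (G N s).Dart) :
    Finsupp.single d 1 + Finsupp.single d.symm 1 ∈ M N s := by
  apply Submodule.subset_span
  refine ⟨d.toProd.1, SimpleGraph.Walk.cons d.adj
    (SimpleGraph.Walk.cons d.adj.symm SimpleGraph.Walk.nil), Or.inl (by simp), ?_⟩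
  rw [edgeChain_cons, edgeChain_cons, edgeChain_nil]
  have h1 : (⟨(d.toProd.1, d.toProd.2), d.adj⟩ : (G N s).Dart) = d := by
    apply SimpleGraph.Dart.ext; rfl
  have h2 : (⟨(d.toProd.2, d.toProd.1), d.adj.symm⟩ : (G N s).Dart) = d.symm := by
    apply SimpleGraph.Dart.ext; rfl
  rw [h1, h2, add_zero]

lemma square_mem {v0 v1 v2 v3 : V N s} (h0 : (G N s).Adj v0 v1) (h1 : (G N s).Adj v1 v2)
    (h2 : (G N s).Adj v2 v3) (h3 : (G N s).Adj v3 v0) :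
    Finsupp.single (⟨(v0, v1), h0⟩ : (G N s).Dart) 1 +
      Finsupp.single (⟨(v1, v2), h1⟩ : (G N s).Dart) 1 +
      Finsupp.single (⟨(v2, v3), h2⟩ : (G N s).Dart) 1 +
      Finsupp.single (⟨(v3, v0), h3⟩ : (G N s).Dart) 1 ∈ M N s := by
  apply Submodule.subset_span
  refine ⟨v0, SimpleGraph.Walk.cons h0 (SimpleGraph.Walk.cons h1 (SimpleGraph.Walk.cons h2
    (SimpleGraph.Walk.cons h3 SimpleGraph.Walk.nil))), Or.inr (Or.inl (by simp)), ?_⟩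
  rw [edgeChain_cons, edgeChain_cons, edgeChain_cons, edgeChain_cons, edgeChain_nil]
  abel

lemma hex_mem {v0 v1 v2 v3 v4 v5 : V N s} (h0 : (G N s).Adj v0 v1) (h1 : (G N s).Adj v1 v2)
    (h2 : (G N s).Adj v2 v3) (h3 : (G N s).Adj v3 v4) (h4 : (G N s).Adj v4 v5)
    (h5 : (G N s).Adj v5 v0) :
    Finsupp.single (⟨(v0, v1), h0⟩ : (G N s).Dart) 1 +
      Finsupp.single (⟨(v1, v2), h1⟩ : (G N s).Dart) 1 +
      Finsupp.single (⟨(v2, v3), h2⟩ : (G N s).Dart) 1 +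
      Finsupp.single (⟨(v3, v4), h3⟩ : (G N s).Dart) 1 +
      Finsupp.single (⟨(v4, v5), h4⟩ : (G N s).Dart) 1 +
      Finsupp.single (⟨(v5, v0), h5⟩ : (G N s).Dart) 1 ∈ M N s := by
  apply Submodule.subset_span
  refine ⟨v0, SimpleGraph.Walk.cons h0 (SimpleGraph.Walk.cons h1 (SimpleGraph.Walk.cons h2
    (SimpleGraph.Walk.cons h3 (SimpleGraph.Walk.cons h4 (SimpleGraph.Walk.cons h5
    SimpleGraph.Walk.nil))))), Or.inr (Or.inr (by simp)), ?_⟩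
  rw [edgeChain_cons, edgeChain_cons, edgeChain_cons, edgeChain_cons, edgeChain_cons,
    edgeChain_cons, edgeChain_nil]
  abel

end Stmt8
namespace Stmt8

variable {m : ℕ} {N s : Fin m → ℕ}

lemma swapV_at (v : V N s) (j : Fin m) (i : ℕ) (h : i + 1 < N j) (k : ℕ) (hk : k < N j) :
    swapV v j i h j ⟨k, hk⟩ =
      if k = i then v j ⟨i + 1, h⟩
      else if k = i + 1 then v j ⟨i, Nat.lt_of_succ_lt h⟩
      else v j ⟨k, hk⟩ := by
  by_cases h1 : k = i
  · subst h1
    rw [if_pos rfl]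
    exact swapV_fst v j k h
  · rw [if_neg h1]
    by_cases h2 : k = i + 1
    · subst h2
      rw [if_pos rfl]
      exact swapV_snd v j i h
    · rw [if_neg h2]
      exact swapV_other v j i h h1 h2

lemma swapV_untouched (v : V N s) (j0 : Fin m) (i0 : ℕ) (h0 : i0 + 1 < N j0) (j : Fin m)
    (k : Fin (N j)) (hside : j ≠ j0 ∨ ((k : ℕ) ≠ i0 ∧ (k : ℕ) ≠ i0 + 1)) :
    swapV v j0 i0 h0 j k = v j k := by
  rcases hside with hj | ⟨h1, h2⟩
  · rw [swapV_apply_ne v j0 i0 h0 hj]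
  · by_cases hj : j = j0
    · subst hj
      exact swapV_other v j i0 h0 h1 h2
    · rw [swapV_apply_ne v j0 i0 h0 hj]

lemma swapV_comm (v : V N s) (j0 : Fin m) (i0 : ℕ) (h0 : i0 + 1 < N j0) (j1 : Fin m)
    (i1 : ℕ) (h1 : i1 + 1 < N j1) (hd : j1 ≠ j0 ∨ i1 + 1 < i0 ∨ i0 + 1 < i1) :
    swapV (swapV v j0 i0 h0) j1 i1 h1 = swapV (swapV v j1 i1 h1) j0 i0 h0 := by
  funext j k
  obtain ⟨kv, hkv⟩ := k
  by_cases hj1 : j = j1 <;> by_cases hj0 : j = j0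
  · subst hj1
    subst hj0
    have hdisj : i1 + 1 < i0 ∨ i0 + 1 < i1 := by tauto
    simp only [swapV_at]
    split_ifs <;> first | rfl | (exfalso; omega)
  · subst hj1
    have e1 : ∀ K : Fin (N j), swapV v j0 i0 h0 j K = v j K := fun K =>
      congrFun (swapV_apply_ne v j0 i0 h0 hj0) K
    have e2 : ∀ K : Fin (N j), swapV (swapV v j i1 h1) j0 i0 h0 j K
        = swapV v j i1 h1 j K := fun K => by
      rw [swapV_apply_ne _ j0 i0 h0 hj0]
    simp only [swapV_at, e1, e2]
  · subst hj0
    have e1 : ∀ K : Fin (N j), swapV v j1 i1 h1 j K = v j K := fun K =>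
      congrFun (swapV_apply_ne v j1 i1 h1 hj1) K
    have e2 : ∀ K : Fin (N j), swapV (swapV v j i0 h0) j1 i1 h1 j K
        = swapV v j i0 h0 j K := fun K => by
      rw [swapV_apply_ne _ j1 i1 h1 hj1]
    simp only [swapV_at, e1, e2]
  · rw [swapV_apply_ne (swapV v j0 i0 h0) j1 i1 h1 hj1,
      swapV_apply_ne v j0 i0 h0 hj0,
      swapV_apply_ne (swapV v j1 i1 h1) j0 i0 h0 hj0,
      swapV_apply_ne v j1 i1 h1 hj1]

/-- If every descent of `w = swapV v j0 i0 h0` is `≥ (j0, i0)`, then `fsort w = v`. -/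
lemma min_back (v : V N s) (j0 : Fin m) (i0 : ℕ) (h0 : i0 + 1 < N j0)
    (hdesc : descAt (swapV v j0 i0 h0) j0 i0)
    (hnd : ∀ i, i + 1 = i0 → ¬ descAt (swapV v j0 i0 h0) j0 i)
    (hv : ∀ x ∈ Dset v, x ∈ Dset (swapV v j0 i0 h0) → toLex (j0, i0) ≤ x) :
    fsort (swapV v j0 i0 h0) = v := by
  have hmem : toLex (j0, i0) ∈ Dset (swapV v j0 i0 h0) := mem_Dset.mpr hdesc
  have hne : (Dset (swapV v j0 i0 h0)).Nonempty := ⟨_, hmem⟩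
  have hminle : ∀ x ∈ Dset (swapV v j0 i0 h0), toLex (j0, i0) ≤ x := by
    intro x hx
    rcases Dset_swapV_cases hx with h | ⟨hj, hI1, hI2⟩
    · exact hv x h hx
    · by_cases hcase : (ofLex x).2 + 1 = i0
      · exact absurd (by rw [mem_Dset'] at hx; rwa [hj] at hx) (hnd _ hcase)
      · show toLex (j0, i0) ≤ toLex (ofLex x)
        rw [Prod.Lex.le_iff]
        exact Or.inr ⟨hj.symm, by simp only [ofLex_toLex]; omega⟩
  have hmin : (Dset (swapV v j0 i0 h0)).min' hne = toLex (j0, i0) :=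
    le_antisymm (Finset.min'_le _ _ hmem) (Finset.le_min' _ _ _ hminle)
  rw [fsort_eq _ hne h0 hmin, swapV_swapV]

end Stmt8
namespace Stmt8

variable {m : ℕ} {N s : Fin m → ℕ}

lemma swapV_untouched' (v : V N s) (j0 : Fin m) (i0 : ℕ) (h0 : i0 + 1 < N j0) (j : Fin m)
    (k : ℕ) (hk : k < N j) (hside : j ≠ j0 ∨ (k ≠ i0 ∧ k ≠ i0 + 1)) :
    swapV v j0 i0 h0 j ⟨k, hk⟩ = v j ⟨k, hk⟩ := by
  apply swapV_untouched
  rcases hside with h | ⟨h1, h2⟩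
  · exact Or.inl h
  · exact Or.inr ⟨h1, h2⟩

lemma hnd_lemma (v : V N s) (j0 : Fin m) (i0 : ℕ) (h0 : i0 + 1 < N j0)
    (hasc : v j0 ⟨i0, Nat.lt_of_succ_lt h0⟩ < v j0 ⟨i0 + 1, h0⟩) (i : ℕ) (hi : i + 1 = i0)
    (hprev : ¬ descAt v j0 i) : ¬ descAt (swapV v j0 i0 h0) j0 i := by
  subst hi
  rintro ⟨hb, hlt⟩
  rw [swapV_at v j0 (i + 1) h0 (i + 1) hb] at hlt
  rw [if_pos rfl] at hlt
  rw [swapV_at v j0 (i + 1) h0 i (Nat.lt_of_succ_lt hb)] at hlt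
  rw [if_neg (by omega : ¬ i = i + 1), if_neg (by omega : ¬ i = i + 1 + 1)] at hlt
  have hprev' : ¬ (v j0 ⟨i + 1, Nat.lt_of_succ_lt h0⟩ < v j0 ⟨i, Nat.lt_of_succ_lt hb⟩) :=
    fun hh => hprev ⟨Nat.lt_of_succ_lt h0, hh⟩
  exact hprev' (lt_trans hasc hlt)

lemma keyAsc (n : ℕ)
    (IH : ∀ k, k < n → ∀ (x y : V N s) (hxy : (G N s).Adj x y), inv x + inv y = k →
      Finsupp.single (⟨(x, y), hxy⟩ : (G N s).Dart) 1 + P y - P x ∈ M N s)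
    (v : V N s) (j0 : Fin m) (i0 : ℕ) (h0 : i0 + 1 < N j0)
    (hasc : v j0 ⟨i0, Nat.lt_of_succ_lt h0⟩ < v j0 ⟨i0 + 1, h0⟩)
    (ha : (G N s).Adj v (swapV v j0 i0 h0))
    (hn : inv v + inv (swapV v j0 i0 h0) = n) :
    Finsupp.single (⟨(v, swapV v j0 i0 h0), ha⟩ : (G N s).Dart) 1 + P (swapV v j0 i0 h0) - P v
      ∈ M N s := by
  have hinvw : inv (swapV v j0 i0 h0) = inv v + 1 := inv_swapV_asc v j0 i0 h0 hasc
  have hdescw : descAt (swapV v j0 i0 h0) j0 i0 :=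
    ⟨h0, by rw [swapV_fst, swapV_snd]; exact hasc⟩
  have hnew : (Dset (swapV v j0 i0 h0)).Nonempty := ⟨_, mem_Dset.mpr hdescw⟩
  have finish_back : fsort (swapV v j0 i0 h0) = v →
      Finsupp.single (⟨(v, swapV v j0 i0 h0), ha⟩ : (G N s).Dart) 1 +
        P (swapV v j0 i0 h0) - P v ∈ M N s := by
    intro hfw
    rw [P_eq_of (swapV v j0 i0 h0) hnew hfw ha.symm]
    have hrw : Finsupp.single (⟨(v, swapV v j0 i0 h0), ha⟩ : (G N s).Dart) 1 +
        (Finsupp.single (⟨(swapV v j0 i0 h0, v), ha.symm⟩ : (G N s).Dart) 1 + P v) - P v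
        = Finsupp.single (⟨(v, swapV v j0 i0 h0), ha⟩ : (G N s).Dart) 1 +
          Finsupp.single ((⟨(v, swapV v j0 i0 h0), ha⟩ : (G N s).Dart).symm) 1 := by
      have hds : ((⟨(v, swapV v j0 i0 h0), ha⟩ : (G N s).Dart).symm)
          = ⟨(swapV v j0 i0 h0, v), ha.symm⟩ := rfl
      rw [hds]; abel
    rw [hrw]
    exact loop2_mem _
  by_cases hv : (Dset v).Nonempty
  · -- v has a descent
    rcases hfp : fpos v hv with ⟨j1, i1⟩
    have hd1 : descAt v j1 i1 := by
      have := descAt_fpos v hv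
      rwa [hfp] at this
    have hminv : (Dset v).min' hv = toLex (j1, i1) := by rw [← hfp]; rfl
    have hminle : ∀ x ∈ Dset v, toLex (j1, i1) ≤ x := fun x hx =>
      hminv ▸ Finset.min'_le _ _ hx
    rcases lt_trichotomy (toLex (j1, i1) : Fin m ×ₗ ℕ) (toLex (j0, i0)) with hlt | heq | hgt
    · -- first descent of v is before the swap position
      by_cases hbraid : j1 = j0 ∧ i1 + 1 = i0
      · -- overlapping: braid / hexagon territory
        obtain ⟨hbj, hbi⟩ := hbraid
        subst hbj
        subst hbi
        obtain ⟨hb1, hba⟩ := hd1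
        by_cases hca : v j1 ⟨i1 + 1 + 1, h0⟩ < v j1 ⟨i1, Nat.lt_of_succ_lt hb1⟩
        · -- hexagon case
          set W := swapV v j1 (i1 + 1) h0 with hWdef
          set Y1 := swapV W j1 i1 hb1 with hY1def
          set Y2 := swapV Y1 j1 (i1 + 1) h0 with hY2def
          set Y3 := swapV Y2 j1 i1 hb1 with hY3def
          set X := swapV v j1 i1 hb1 with hXdef
          -- letter values
          have hW1 : W j1 ⟨i1, Nat.lt_of_succ_lt hb1⟩ = v j1 ⟨i1, Nat.lt_of_succ_lt hb1⟩ :=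
            swapV_untouched' v j1 (i1 + 1) h0 j1 i1 _ (Or.inr ⟨by omega, by omega⟩)
          have hW2 : W j1 ⟨i1 + 1, hb1⟩ = v j1 ⟨i1 + 1 + 1, h0⟩ := by
            rw [hWdef, swapV_at v j1 (i1 + 1) h0 (i1 + 1) hb1, if_pos rfl]
          have hW3 : W j1 ⟨i1 + 1 + 1, h0⟩ = v j1 ⟨i1 + 1, hb1⟩ := by
            rw [hWdef, swapV_at v j1 (i1 + 1) h0 (i1 + 1 + 1) h0,
              if_neg (by omega : ¬ i1 + 1 + 1 = i1 + 1), if_pos rfl]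
          have hY1_1 : Y1 j1 ⟨i1, Nat.lt_of_succ_lt hb1⟩ = v j1 ⟨i1 + 1 + 1, h0⟩ := by
            rw [hY1def, swapV_at W j1 i1 hb1 i1 (Nat.lt_of_succ_lt hb1), if_pos rfl]
            exact hW2
          have hY1_2 : Y1 j1 ⟨i1 + 1, hb1⟩ = v j1 ⟨i1, Nat.lt_of_succ_lt hb1⟩ := by
            rw [hY1def, swapV_at W j1 i1 hb1 (i1 + 1) hb1,
              if_neg (by omega : ¬ i1 + 1 = i1), if_pos rfl]
            exact hW1
          have hY1_3 : Y1 j1 ⟨i1 + 1 + 1, h0⟩ = v j1 ⟨i1 + 1, hb1⟩ := by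
            rw [hY1def, swapV_at W j1 i1 hb1 (i1 + 1 + 1) h0,
              if_neg (by omega : ¬ i1 + 1 + 1 = i1), if_neg (by omega : ¬ i1 + 1 + 1 = i1 + 1)]
            exact hW3
          have hY2_1 : Y2 j1 ⟨i1, Nat.lt_of_succ_lt hb1⟩ = v j1 ⟨i1 + 1 + 1, h0⟩ := by
            rw [hY2def, swapV_at Y1 j1 (i1 + 1) h0 i1 (Nat.lt_of_succ_lt hb1),
              if_neg (by omega : ¬ i1 = i1 + 1), if_neg (by omega : ¬ i1 = i1 + 1 + 1)]
            exact hY1_1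
          have hY2_2 : Y2 j1 ⟨i1 + 1, hb1⟩ = v j1 ⟨i1 + 1, hb1⟩ := by
            rw [hY2def, swapV_at Y1 j1 (i1 + 1) h0 (i1 + 1) hb1, if_pos rfl]
            exact hY1_3
          have hY2_3 : Y2 j1 ⟨i1 + 1 + 1, h0⟩ = v j1 ⟨i1, Nat.lt_of_succ_lt hb1⟩ := by
            rw [hY2def, swapV_at Y1 j1 (i1 + 1) h0 (i1 + 1 + 1) h0,
              if_neg (by omega : ¬ i1 + 1 + 1 = i1 + 1), if_pos rfl]
            exact hY1_2
          have hY3_1 : Y3 j1 ⟨i1, Nat.lt_of_succ_lt hb1⟩ = v j1 ⟨i1 + 1, hb1⟩ := by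
            rw [hY3def, swapV_at Y2 j1 i1 hb1 i1 (Nat.lt_of_succ_lt hb1), if_pos rfl]
            exact hY2_2
          have hY3_2 : Y3 j1 ⟨i1 + 1, hb1⟩ = v j1 ⟨i1 + 1 + 1, h0⟩ := by
            rw [hY3def, swapV_at Y2 j1 i1 hb1 (i1 + 1) hb1,
              if_neg (by omega : ¬ i1 + 1 = i1), if_pos rfl]
            exact hY2_1
          have hY3_3 : Y3 j1 ⟨i1 + 1 + 1, h0⟩ = v j1 ⟨i1, Nat.lt_of_succ_lt hb1⟩ := by
            rw [hY3def, swapV_at Y2 j1 i1 hb1 (i1 + 1 + 1) h0,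
              if_neg (by omega : ¬ i1 + 1 + 1 = i1), if_neg (by omega : ¬ i1 + 1 + 1 = i1 + 1)]
            exact hY2_3
          have hX1 : X j1 ⟨i1, Nat.lt_of_succ_lt hb1⟩ = v j1 ⟨i1 + 1, hb1⟩ := by
            rw [hXdef, swapV_at v j1 i1 hb1 i1 (Nat.lt_of_succ_lt hb1), if_pos rfl]
          have hX2 : X j1 ⟨i1 + 1, hb1⟩ = v j1 ⟨i1, Nat.lt_of_succ_lt hb1⟩ := by
            rw [hXdef, swapV_at v j1 i1 hb1 (i1 + 1) hb1,
              if_neg (by omega : ¬ i1 + 1 = i1), if_pos rfl]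
          have hX3 : X j1 ⟨i1 + 1 + 1, h0⟩ = v j1 ⟨i1 + 1 + 1, h0⟩ := by
            rw [hXdef, swapV_at v j1 i1 hb1 (i1 + 1 + 1) h0,
              if_neg (by omega : ¬ i1 + 1 + 1 = i1), if_neg (by omega : ¬ i1 + 1 + 1 = i1 + 1)]
          -- the sixth vertex closes up
          have hXY3 : swapV Y3 j1 (i1 + 1) h0 = X := by
            funext j k
            by_cases hj : j = j1
            · subst hj
              obtain ⟨kv, hk⟩ := k
              by_cases hk1 : kv = i1
              · subst hk1
                have e5 : swapV Y3 j (kv + 1) h0 j ⟨kv, hk⟩ = Y3 j ⟨kv, hk⟩ :=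
                  swapV_untouched' Y3 j (kv + 1) h0 j kv hk (Or.inr ⟨by omega, by omega⟩)
                exact e5.trans (hY3_1.trans hX1.symm)
              · by_cases hk2 : kv = i1 + 1
                · subst hk2
                  exact (swapV_fst Y3 j (i1 + 1) h0).trans (hY3_3.trans hX2.symm)
                · by_cases hk3 : kv = i1 + 1 + 1
                  · subst hk3
                    exact (swapV_snd Y3 j (i1 + 1) h0).trans (hY3_2.trans hX3.symm)
                  · have e5 : swapV Y3 j (i1 + 1) h0 j ⟨kv, hk⟩ = Y3 j ⟨kv, hk⟩ :=
                      swapV_untouched' Y3 j (i1 + 1) h0 j kv hk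
                        (Or.inr ⟨by omega, by omega⟩)
                    have e4 : Y3 j ⟨kv, hk⟩ = Y2 j ⟨kv, hk⟩ :=
                      swapV_untouched' Y2 j i1 hb1 j kv hk (Or.inr ⟨by omega, by omega⟩)
                    have e3 : Y2 j ⟨kv, hk⟩ = Y1 j ⟨kv, hk⟩ :=
                      swapV_untouched' Y1 j (i1 + 1) h0 j kv hk
                        (Or.inr ⟨by omega, by omega⟩)
                    have e2 : Y1 j ⟨kv, hk⟩ = W j ⟨kv, hk⟩ :=
                      swapV_untouched' W j i1 hb1 j kv hk (Or.inr ⟨by omega, by omega⟩)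
                    have e1 : W j ⟨kv, hk⟩ = v j ⟨kv, hk⟩ :=
                      swapV_untouched' v j (i1 + 1) h0 j kv hk
                        (Or.inr ⟨by omega, by omega⟩)
                    have e0 : X j ⟨kv, hk⟩ = v j ⟨kv, hk⟩ :=
                      swapV_untouched' v j i1 hb1 j kv hk (Or.inr ⟨by omega, by omega⟩)
                    exact (e5.trans (e4.trans (e3.trans (e2.trans e1)))).trans e0.symm
            · exact congrFun ((swapV_apply_ne Y3 j1 (i1 + 1) h0 hj).trans
                ((swapV_apply_ne Y2 j1 i1 hb1 hj).trans
                ((swapV_apply_ne Y1 j1 (i1 + 1) h0 hj).trans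
                ((swapV_apply_ne W j1 i1 hb1 hj).trans
                ((swapV_apply_ne v j1 (i1 + 1) h0 hj).trans
                (swapV_apply_ne v j1 i1 hb1 hj).symm))))) k
          -- adjacencies
          have hadjW1 : (G N s).Adj W Y1 := by
            apply adj_swapV W j1 i1 hb1
            rw [hW1, hW2]
            exact (ne_of_lt hca).symm
          have hadj12 : (G N s).Adj Y1 Y2 := by
            apply adj_swapV Y1 j1 (i1 + 1) h0
            rw [hY1_2, hY1_3]
            exact (ne_of_gt hba)
          have hadj23 : (G N s).Adj Y2 Y3 := by
            apply adj_swapV Y2 j1 i1 hb1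
            rw [hY2_1, hY2_2]
            exact (ne_of_gt hasc)
          have hadj3X : (G N s).Adj Y3 X := by
            rw [← hXY3]
            apply adj_swapV Y3 j1 (i1 + 1) h0
            rw [hY3_2, hY3_3]
            exact (ne_of_lt hca)
          have hadjvX : (G N s).Adj v X := adj_swapV v j1 i1 hb1 (ne_of_gt hba)
          -- sorting facts
          have hfsv : fsort v = X := fsort_eq v hv hb1 hminv
          have hdW1 : descAt W j1 i1 := ⟨hb1, by rw [hW2, hW1]; exact hca⟩
          have hminW : (Dset W).min' hnew = toLex (j1, i1) := by
            apply le_antisymm (Finset.min'_le _ _ (mem_Dset.mpr hdW1))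
            apply Finset.le_min'
            intro x hx
            rcases Dset_swapV_cases hx with hxv | ⟨hj, hI1, hI2⟩
            · exact hminle x hxv
            · show toLex (j1, i1) ≤ toLex (ofLex x)
              rw [Prod.Lex.le_iff]
              exact Or.inr ⟨hj.symm, by simp only [ofLex_toLex]; omega⟩
          have hfsW : fsort W = Y1 := fsort_eq W hnew hb1 hminW
          -- inversion counts
          have hinv1 : inv W = inv Y1 + 1 := by
            apply inv_swapV_desc W j1 i1 hb1
            rw [hW2, hW1]
            exact hca
          have hinv2 : inv Y1 = inv Y2 + 1 := by
            apply inv_swapV_desc Y1 j1 (i1 + 1) h0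
            rw [hY1_3, hY1_2]
            exact hba
          have hinv3 : inv Y2 = inv Y3 + 1 := by
            apply inv_swapV_desc Y2 j1 i1 hb1
            rw [hY2_2, hY2_1]
            exact hasc
          have hinvX : inv X = inv Y3 + 1 := by
            rw [← hXY3]
            apply inv_swapV_asc Y3 j1 (i1 + 1) h0
            rw [hY3_2, hY3_3]
            exact hca
          -- induction hypotheses
          have hIH1 := IH (inv Y1 + inv Y2) (by omega) Y1 Y2 hadj12 rfl
          have hIH2 := IH (inv Y2 + inv Y3) (by omega) Y2 Y3 hadj23 rfl
          have hIH3 := IH (inv Y3 + inv X) (by omega) Y3 X hadj3X rfl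
          -- unfold the combing chains
          have hPv : P v = Finsupp.single (⟨(v, X), hadjvX⟩ : (G N s).Dart) 1 + P X :=
            P_eq_of v hv hfsv hadjvX
          have hPW : P W = Finsupp.single (⟨(W, Y1), hadjW1⟩ : (G N s).Dart) 1 + P Y1 :=
            P_eq_of W hnew hfsW hadjW1
          have hhex := hex_mem ha hadjW1 hadj12 hadj23 hadj3X hadjvX.symm
          have hl := loop2_mem (⟨(X, v), hadjvX.symm⟩ : (G N s).Dart)
          have el : ((⟨(X, v), hadjvX.symm⟩ : (G N s).Dart).symm)
              = (⟨(v, X), hadjvX⟩ : (G N s).Dart) := rfl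
          rw [el] at hl
          rw [hPW, hPv]
          have hiden : Finsupp.single (⟨(v, W), ha⟩ : (G N s).Dart) 1 +
              (Finsupp.single (⟨(W, Y1), hadjW1⟩ : (G N s).Dart) 1 + P Y1) -
              (Finsupp.single (⟨(v, X), hadjvX⟩ : (G N s).Dart) 1 + P X)
              = ((((Finsupp.single (⟨(v, W), ha⟩ : (G N s).Dart) 1 +
                  Finsupp.single (⟨(W, Y1), hadjW1⟩ : (G N s).Dart) 1 +
                  Finsupp.single (⟨(Y1, Y2), hadj12⟩ : (G N s).Dart) 1 +
                  Finsupp.single (⟨(Y2, Y3), hadj23⟩ : (G N s).Dart) 1 +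
                  Finsupp.single (⟨(Y3, X), hadj3X⟩ : (G N s).Dart) 1 +
                  Finsupp.single (⟨(X, v), hadjvX.symm⟩ : (G N s).Dart) 1) -
                (Finsupp.single (⟨(X, v), hadjvX.symm⟩ : (G N s).Dart) 1 +
                  Finsupp.single (⟨(v, X), hadjvX⟩ : (G N s).Dart) 1)) -
                (Finsupp.single (⟨(Y1, Y2), hadj12⟩ : (G N s).Dart) 1 + P Y2 - P Y1)) -
                (Finsupp.single (⟨(Y2, Y3), hadj23⟩ : (G N s).Dart) 1 + P Y3 - P Y2)) -
                (Finsupp.single (⟨(Y3, X), hadj3X⟩ : (G N s).Dart) 1 + P X - P Y3) := by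
            abel
          rw [hiden]
          exact sub_mem (sub_mem (sub_mem (sub_mem hhex hl) hIH1) hIH2) hIH3
        · -- not a descent of w at i1 : fsort w = v
          have hndw : ¬ descAt (swapV v j1 (i1 + 1) h0) j1 i1 := by
            rintro ⟨hb, hlt⟩
            rw [swapV_at v j1 (i1 + 1) h0 (i1 + 1) hb] at hlt
            rw [if_pos rfl] at hlt
            rw [swapV_at v j1 (i1 + 1) h0 i1 (Nat.lt_of_succ_lt hb)] at hlt
            rw [if_neg (by omega : ¬ i1 = i1 + 1),
              if_neg (by omega : ¬ i1 = i1 + 1 + 1)] at hlt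
            exact hca hlt
          apply finish_back
          apply min_back v j1 (i1 + 1) h0 hdescw
          · intro i hi
            have : i = i1 := by omega
            subst this
            exact hndw
          · intro x hx hxw
            rcases eq_or_lt_of_le (hminle x hx) with heq2 | hlt2
            · exfalso
              rw [← heq2, mem_Dset] at hxw
              exact hndw hxw
            · show toLex (j1, i1 + 1) ≤ toLex (ofLex x)
              rw [Prod.Lex.le_iff]
              have := Prod.Lex.lt_iff.mp hlt2
              rcases this with h | ⟨h1, h2⟩
              · exact Or.inl h
              · exact Or.inr ⟨h1, by simp only [ofLex_toLex] at h2 ⊢; omega⟩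
      · -- disjoint: square case
        have hb1 : i1 + 1 < N j1 := hd1.choose
        have hba : v j1 ⟨i1 + 1, hb1⟩ < v j1 ⟨i1, Nat.lt_of_succ_lt hb1⟩ := hd1.choose_spec
        have hdisj : j1 ≠ j0 ∨ i1 + 1 < i0 := by
          rcases Prod.Lex.lt_iff.mp hlt with h | ⟨h1, h2⟩
          · exact Or.inl (ne_of_lt h)
          · simp only [ofLex_toLex] at h1 h2
            refine Or.inr ?_
            have : i1 + 1 ≠ i0 := fun hh => hbraid ⟨h1, hh⟩
            omega
        have hside : j1 ≠ j0 ∨ i1 + 1 < i0 ∨ i0 + 1 < i1 := by tauto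
        set W := swapV v j0 i0 h0 with hWdef
        set X := swapV v j1 i1 hb1 with hXdef
        set Y := swapV W j1 i1 hb1 with hYdef
        have hWa : W j1 ⟨i1, Nat.lt_of_succ_lt hb1⟩ = v j1 ⟨i1, Nat.lt_of_succ_lt hb1⟩ := by
          apply swapV_untouched' v j0 i0 h0 j1 i1
          rcases hdisj with h | h
          · exact Or.inl h
          · exact Or.inr ⟨by omega, by omega⟩
        have hWb : W j1 ⟨i1 + 1, hb1⟩ = v j1 ⟨i1 + 1, hb1⟩ := by
          apply swapV_untouched' v j0 i0 h0 j1 (i1 + 1)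
          rcases hdisj with h | h
          · exact Or.inl h
          · exact Or.inr ⟨by omega, by omega⟩
        have hXa : X j0 ⟨i0, Nat.lt_of_succ_lt h0⟩ = v j0 ⟨i0, Nat.lt_of_succ_lt h0⟩ := by
          apply swapV_untouched' v j1 i1 hb1 j0 i0
          rcases hdisj with h | h
          · exact Or.inl (Ne.symm h)
          · exact Or.inr ⟨by omega, by omega⟩
        have hXb : X j0 ⟨i0 + 1, h0⟩ = v j0 ⟨i0 + 1, h0⟩ := by
          apply swapV_untouched' v j1 i1 hb1 j0 (i0 + 1)
          rcases hdisj with h | h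
          · exact Or.inl (Ne.symm h)
          · exact Or.inr ⟨by omega, by omega⟩
        have hdW1 : descAt W j1 i1 := by
          rw [hWdef, descAt_swapV_iff v j0 i0 h0 hside]
          exact hd1
        have hfsv : fsort v = X := fsort_eq v hv hb1 hminv
        have hminW : (Dset W).min' hnew = toLex (j1, i1) := by
          apply le_antisymm (Finset.min'_le _ _ (mem_Dset.mpr hdW1))
          apply Finset.le_min'
          intro x hx
          rcases Dset_swapV_cases hx with hxv | ⟨hj, hI1, hI2⟩
          · exact hminle x hxv
          · show toLex (j1, i1) ≤ toLex (ofLex x)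
            rw [Prod.Lex.le_iff]
            rcases Prod.Lex.lt_iff.mp hlt with h | ⟨h1, h2⟩
            · simp only [ofLex_toLex] at h
              exact Or.inl (by simp only [ofLex_toLex]; rw [hj]; exact h)
            · simp only [ofLex_toLex] at h1 h2
              have : i1 + 1 ≠ i0 := fun hh => hbraid ⟨h1, hh⟩
              exact Or.inr ⟨by simp only [ofLex_toLex]; rw [hj, h1], by simp only [ofLex_toLex]; omega⟩
        have hfsW : fsort W = Y := fsort_eq W hnew hb1 hminW
        have hYX : Y = swapV X j0 i0 h0 := swapV_comm v j0 i0 h0 j1 i1 hb1 hside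
        have hadjvX : (G N s).Adj v X := adj_swapV v j1 i1 hb1 (ne_of_gt hba)
        have hadjWY : (G N s).Adj W Y := by
          apply adj_swapV W j1 i1 hb1
          rw [hWa, hWb]
          exact ne_of_gt hba
        have hadjXY : (G N s).Adj X Y := by
          rw [hYX]
          apply adj_swapV X j0 i0 h0
          rw [hXa, hXb]
          exact ne_of_lt hasc
        have hinvX : inv v = inv X + 1 := inv_swapV_desc v j1 i1 hb1 hba
        have hinvY : inv W = inv Y + 1 := by
          apply inv_swapV_desc W j1 i1 hb1
          rw [hWa, hWb]
          exact hba
        have hIH := IH (inv X + inv Y) (by omega) X Y hadjXY rfl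
        have hPv : P v = Finsupp.single (⟨(v, X), hadjvX⟩ : (G N s).Dart) 1 + P X :=
          P_eq_of v hv hfsv hadjvX
        have hPW : P W = Finsupp.single (⟨(W, Y), hadjWY⟩ : (G N s).Dart) 1 + P Y :=
          P_eq_of W hnew hfsW hadjWY
        have hsq := square_mem ha hadjWY hadjXY.symm hadjvX.symm
        have hl1 := loop2_mem (⟨(Y, X), hadjXY.symm⟩ : (G N s).Dart)
        have e1 : ((⟨(Y, X), hadjXY.symm⟩ : (G N s).Dart).symm)
            = (⟨(X, Y), hadjXY⟩ : (G N s).Dart) := rfl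
        rw [e1] at hl1
        have hl2 := loop2_mem (⟨(X, v), hadjvX.symm⟩ : (G N s).Dart)
        have e2 : ((⟨(X, v), hadjvX.symm⟩ : (G N s).Dart).symm)
            = (⟨(v, X), hadjvX⟩ : (G N s).Dart) := rfl
        rw [e2] at hl2
        rw [hPW, hPv]
        have hiden : Finsupp.single (⟨(v, W), ha⟩ : (G N s).Dart) 1 +
            (Finsupp.single (⟨(W, Y), hadjWY⟩ : (G N s).Dart) 1 + P Y) -
            (Finsupp.single (⟨(v, X), hadjvX⟩ : (G N s).Dart) 1 + P X)
            = ((Finsupp.single (⟨(X, Y), hadjXY⟩ : (G N s).Dart) 1 + P Y - P X) +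
              (Finsupp.single (⟨(v, W), ha⟩ : (G N s).Dart) 1 +
                Finsupp.single (⟨(W, Y), hadjWY⟩ : (G N s).Dart) 1 +
                Finsupp.single (⟨(Y, X), hadjXY.symm⟩ : (G N s).Dart) 1 +
                Finsupp.single (⟨(X, v), hadjvX.symm⟩ : (G N s).Dart) 1)) -
              (Finsupp.single (⟨(Y, X), hadjXY.symm⟩ : (G N s).Dart) 1 +
                Finsupp.single (⟨(X, Y), hadjXY⟩ : (G N s).Dart) 1) -
              (Finsupp.single (⟨(X, v), hadjvX.symm⟩ : (G N s).Dart) 1 +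
                Finsupp.single (⟨(v, X), hadjvX⟩ : (G N s).Dart) 1) := by
          abel
        rw [hiden]
        exact sub_mem (sub_mem (add_mem hIH hsq) hl1) hl2
    · -- impossible: v ascends at (j0, i0)
      exfalso
      have : (j1, i1) = (j0, i0) := toLex.injective heq
      rw [Prod.mk.injEq] at this
      obtain ⟨rfl, rfl⟩ := this
      obtain ⟨hb, hl⟩ := hd1
      exact absurd hasc (not_lt.mpr (le_of_lt hl))
    · -- first descent of v is after the swap position: fsort w = v
      apply finish_back
      apply min_back v j0 i0 h0 hdescw
      · intro i hi
        apply hnd_lemma v j0 i0 h0 hasc i hi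
        intro hd
        have h1 := hminle _ (mem_Dset.mpr hd)
        have h2 : (toLex (j0, i) : Fin m ×ₗ ℕ) < toLex (j0, i0) := by
          rw [Prod.Lex.lt_iff]; exact Or.inr ⟨rfl, by simp only [ofLex_toLex]; omega⟩
        exact absurd (lt_of_le_of_lt h1 h2) (not_lt.mpr (le_of_lt hgt))
      · intro x hx _
        exact le_of_lt (lt_of_lt_of_le hgt (hminle x hx))
  · -- v is sorted : fsort w = v
    apply finish_back
    apply min_back v j0 i0 h0 hdescw
    · intro i hi
      apply hnd_lemma v j0 i0 h0 hasc i hi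
      intro hd
      exact hv ⟨_, mem_Dset.mpr hd⟩
    · intro x hx _
      exact absurd ⟨x, hx⟩ hv

end Stmt8
namespace Stmt8

variable {m : ℕ} {N s : Fin m → ℕ}

lemma key (n : ℕ) : ∀ (v w : V N s) (ha : (G N s).Adj v w), inv v + inv w = n →
    Finsupp.single (⟨(v, w), ha⟩ : (G N s).Dart) 1 + P w - P v ∈ M N s := by
  induction n using Nat.strong_induction_on with
  | _ n IH =>
  intro v w ha hn
  obtain ⟨j0, hadj, hagree⟩ := id ha
  obtain ⟨i0, h0, hne0, heq⟩ := hadj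
  have hw : w = swapV v j0 i0 h0 := by
    funext j'
    by_cases hj : j' = j0
    · subst hj; rw [swapV_apply_self]; exact heq
    · rw [swapV_apply_ne v j0 i0 h0 hj]; exact (hagree j' hj).symm
  subst hw
  rcases lt_or_gt_of_ne hne0 with hasc | hdesc
  · exact keyAsc n IH v j0 i0 h0 hasc ha hn
  · have hasc' : (swapV v j0 i0 h0) j0 ⟨i0, Nat.lt_of_succ_lt h0⟩ <
        (swapV v j0 i0 h0) j0 ⟨i0 + 1, h0⟩ := by
      rw [swapV_fst, swapV_snd]; exact hdesc
    have ha' : (G N s).Adj (swapV v j0 i0 h0) (swapV (swapV v j0 i0 h0) j0 i0 h0) := by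
      rw [swapV_swapV]; exact ha.symm
    have hmem := keyAsc n IH (swapV v j0 i0 h0) j0 i0 h0 hasc' ha'
      (by rw [swapV_swapV]; omega)
    have hd : (⟨(swapV v j0 i0 h0, swapV (swapV v j0 i0 h0) j0 i0 h0), ha'⟩ : (G N s).Dart)
        = ⟨(swapV v j0 i0 h0, v), ha.symm⟩ := by
      apply SimpleGraph.Dart.ext
      rw [Prod.mk.injEq]
      exact ⟨rfl, swapV_swapV v j0 i0 h0⟩
    rw [hd, swapV_swapV v j0 i0 h0] at hmem
    have hl := loop2_mem (⟨(v, swapV v j0 i0 h0), ha⟩ : (G N s).Dart)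
    have esymm : ((⟨(v, swapV v j0 i0 h0), ha⟩ : (G N s).Dart).symm)
        = ⟨(swapV v j0 i0 h0, v), ha.symm⟩ := rfl
    rw [esymm] at hl
    have hiden : Finsupp.single (⟨(v, swapV v j0 i0 h0), ha⟩ : (G N s).Dart) 1 +
        P (swapV v j0 i0 h0) - P v
        = (Finsupp.single (⟨(v, swapV v j0 i0 h0), ha⟩ : (G N s).Dart) 1 +
          Finsupp.single (⟨(swapV v j0 i0 h0, v), ha.symm⟩ : (G N s).Dart) 1) -
          (Finsupp.single (⟨(swapV v j0 i0 h0, v), ha.symm⟩ : (G N s).Dart) 1 +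
            P v - P (swapV v j0 i0 h0)) := by abel
    rw [hiden]
    exact sub_mem hl hmem

lemma key' (d : (G N s).Dart) :
    Finsupp.single d 1 + P d.toProd.2 - P d.toProd.1 ∈ M N s := by
  have h := key (inv d.toProd.1 + inv d.toProd.2) d.toProd.1 d.toProd.2 d.adj rfl
  have hd : (⟨(d.toProd.1, d.toProd.2), d.adj⟩ : (G N s).Dart) = d := by
    apply SimpleGraph.Dart.ext; rfl
  rwa [hd] at h

end Stmt8

theorem stmt8 (m : ℕ) (N s : Fin m → ℕ) (hN : ∀ j, 1 ≤ N j) (hs : ∀ j, 1 ≤ s j)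
    (c : (boxProdFamily fun j => permutograph (N j) (s j)).Dart →₀ ℤ)
    (hc : graphBoundary (boxProdFamily fun j => permutograph (N j) (s j)) c = 0) :
    c ∈ Submodule.span ℤ
      {x : (boxProdFamily fun j => permutograph (N j) (s j)).Dart →₀ ℤ |
        ∃ (u : ∀ j : Fin m, Fin (N j) → Fin (s j))
          (w : (boxProdFamily fun j => permutograph (N j) (s j)).Walk u u),
          (w.length = 2 ∨ w.length = 4 ∨ w.length = 6) ∧ x = edgeChain w} := by
  classical
  show c ∈ Stmt8.M N s
  let Q : ((Stmt8.V N s) →₀ ℤ) →ₗ[ℤ] ((Stmt8.G N s).Dart →₀ ℤ) :=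
    Finsupp.lift _ ℤ _ (fun x => Stmt8.P x)
  let R : ((Stmt8.G N s).Dart →₀ ℤ) →ₗ[ℤ] ((Stmt8.G N s).Dart →₀ ℤ) :=
    Finsupp.lift _ ℤ _ (fun d =>
      Finsupp.single d 1 + Stmt8.P d.toProd.2 - Stmt8.P d.toProd.1)
  have hRc : ∀ x, R x = x + Q (graphBoundary (Stmt8.G N s) x) := by
    intro x
    induction x using Finsupp.induction_linear with
    | zero => simp
    | add a b ha hb =>
      rw [map_add, map_add, map_add, ha, hb]
      abel
    | single d n =>
      have e1 : R (Finsupp.single d n) =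
          n • (Finsupp.single d 1 + Stmt8.P d.toProd.2 - Stmt8.P d.toProd.1) := by
        simp only [R, Finsupp.lift_apply]
        rw [Finsupp.sum_single_index (by simp)]
      have e2 : graphBoundary (Stmt8.G N s) (Finsupp.single d n) =
          n • (Finsupp.single d.toProd.2 1 - Finsupp.single d.toProd.1 1) := by
        simp only [graphBoundary, Finsupp.lift_apply]
        rw [Finsupp.sum_single_index (by simp)]
      have q1 : ∀ x : Stmt8.V N s, Q (Finsupp.single x 1) = Stmt8.P x := by
        intro x
        simp only [Q, Finsupp.lift_apply]
        rw [Finsupp.sum_single_index (by simp)]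
        simp
      have e3 : Q (graphBoundary (Stmt8.G N s) (Finsupp.single d n)) =
          n • (Stmt8.P d.toProd.2 - Stmt8.P d.toProd.1) := by
        rw [e2, map_smul, map_sub, q1, q1]
      rw [e1, e3, smul_sub, smul_add, smul_sub]
      have e4 : n • Finsupp.single d (1 : ℤ) = Finsupp.single d n := by
        rw [Finsupp.smul_single]
        norm_num
      rw [e4]
      abel
  have hc2 : R c = c := by
    rw [hRc c, hc, map_zero, add_zero]
  rw [← hc2]
  rw [Finsupp.lift_apply]
  apply Submodule.finsuppSum_mem
  intro d hd
  exact Submodule.smul_mem _ _ (Stmt8.key' d)
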